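/- Let G = (X, Y) be a bipartite graph of order n with |X| = |Y| and minimum degree δ(G) ≥ k for some integer k > 1. Then γ_t(G) ≤ n·(1 − k! / ∏_{i=0}^{k−1} (k/(k−1) + i)). -/

import Mathlib

open Finset

/-- Positive correlation of monotone functions under uniform counting measure. -/
def GoodSpace (Ω : Type*) [Preorder Ω] : Prop :=
  ∀ (_inst : Fintype Ω), ∀ f g : Ω → ℝ, Monotone f → Monotone g →
    (∑ ω, f ω) * (∑ ω, g ω) ≤ (Fintype.card Ω : ℝ) * ∑ ω, f ω * g ω

lemma goodSpace_linear (Ω : Type*) [LinearOrder Ω] : GoodSpace Ω := by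
  intro inst f g hf hg
  have h : MonovaryOn f g (Finset.univ : Finset Ω) := by
    intro i _ j _ hlt
    by_contra h
    push_neg at h
    have hji : j < i := by
      rcases lt_or_ge j i with h' | h'
      · exact h'
      · exact absurd (hf h') (not_le.2 h)
    exact absurd (hg hji.le) (not_le.2 hlt)
  simpa [Finset.card_univ] using h.sum_mul_sum_le_card_mul_sum

lemma goodSpace_prod {γ δ : Type*} [Fintype γ] [Fintype δ] [Preorder γ] [Preorder δ]
    (hγ : GoodSpace γ) (hδ : GoodSpace δ) : GoodSpace (γ × δ) := by
  intro inst f g hf hg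
  have hi : inst = instFintypeProd γ δ := Subsingleton.elim _ _
  subst hi
  set F : γ → ℝ := fun c => ∑ d, f (c, d) with hF
  set Gm : γ → ℝ := fun c => ∑ d, g (c, d) with hG
  have hFmono : Monotone F := fun c c' h => Finset.sum_le_sum fun d _ => hf (Prod.mk_le_mk.2 ⟨h, le_rfl⟩)
  have hGmono : Monotone Gm := fun c c' h => Finset.sum_le_sum fun d _ => hg (Prod.mk_le_mk.2 ⟨h, le_rfl⟩)
  have hstep : ∀ c, F c * Gm c ≤ (Fintype.card δ : ℝ) * ∑ d, f (c, d) * g (c, d) := by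
    intro c
    exact hδ _ (fun d => f (c, d)) (fun d => g (c, d))
      (fun d d' h => hf (Prod.mk_le_mk.2 ⟨le_rfl, h⟩))
      (fun d d' h => hg (Prod.mk_le_mk.2 ⟨le_rfl, h⟩))
  have h1 : (∑ c, F c) * (∑ c, Gm c) ≤ (Fintype.card γ : ℝ) * ∑ c, F c * Gm c :=
    hγ _ F Gm hFmono hGmono
  have h2 : ∑ c, F c * Gm c ≤ (Fintype.card δ : ℝ) * ∑ c, ∑ d, f (c, d) * g (c, d) := by
    rw [Finset.mul_sum]
    exact Finset.sum_le_sum fun c _ => hstep c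
  calc (∑ ω : γ × δ, f ω) * (∑ ω : γ × δ, g ω)
      = (∑ c, F c) * (∑ c, Gm c) := by rw [Fintype.sum_prod_type, Fintype.sum_prod_type]
    _ ≤ (Fintype.card γ : ℝ) * ∑ c, F c * Gm c := h1
    _ ≤ (Fintype.card γ : ℝ) * ((Fintype.card δ : ℝ) * ∑ c, ∑ d, f (c, d) * g (c, d)) := by
        apply mul_le_mul_of_nonneg_left h2 (by positivity)
    _ = (Fintype.card (γ × δ) : ℝ) * ∑ ω : γ × δ, f ω * g ω := by
        rw [Fintype.card_prod, Fintype.sum_prod_type]; push_cast; ring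

lemma goodSpace_transfer {Ω Ω' : Type*} [Preorder Ω] [Preorder Ω']
    (e : Ω ≃ Ω') (he : Monotone e) (h : GoodSpace Ω) : GoodSpace Ω' := by
  intro inst f g hf hg
  letI instΩ : Fintype Ω := Fintype.ofEquiv Ω' e.symm
  have := h instΩ (f ∘ e) (g ∘ e) (hf.comp he) (hg.comp he)
  simpa [Equiv.sum_comp e f, Equiv.sum_comp e g, Equiv.sum_comp e (fun ω => f ω * g ω),
    Fintype.card_congr e] using this

lemma goodSpace_pi (N : ℕ) (β : Type*) [Fintype β] : GoodSpace (β → Fin N) := by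
  refine Fintype.induction_empty_option (P := fun α _inst => GoodSpace (α → Fin N)) ?_ ?_ ?_ β
  · intro α β' _ e h
    exact goodSpace_transfer (Equiv.arrowCongr e (Equiv.refl (Fin N)))
      (fun f g hfg => fun b => by simpa [Equiv.arrowCongr] using hfg (e.symm b)) h
  · intro inst f g hf hg
    haveI : Unique (PEmpty → Fin N) := ⟨⟨fun x => x.elim⟩, fun f => funext fun x => x.elim⟩
    rw [Fintype.card_unique]
    rw [Fintype.sum_unique f, Fintype.sum_unique g, Fintype.sum_unique (fun ω => f ω * g ω)]
    push_cast
    simp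
  · intro α _ h
    letI := Classical.decEq α
    exact goodSpace_transfer (Equiv.piOptionEquivProd (β := fun _ : Option α => Fin N)).symm
      (fun f g hfg => by
        intro x
        match x with
        | none => exact hfg.1
        | some a => exact hfg.2 a)
      (goodSpace_prod (goodSpace_linear (Fin N)) h)

open scoped Classical in
lemma harris_two {Ω : Type*} [Fintype Ω] [Preorder Ω] (hG : GoodSpace Ω) {A B : Finset Ω}
    (hA : ∀ ⦃x y : Ω⦄, x ≤ y → x ∈ A → y ∈ A) (hB : ∀ ⦃x y : Ω⦄, x ≤ y → x ∈ B → y ∈ B) :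
    (A.card : ℝ) * B.card ≤ (Fintype.card Ω : ℝ) * ((A ∩ B).card : ℝ) := by
  have hf : Monotone (fun ω => if ω ∈ A then (1:ℝ) else 0) := by
    intro x y hxy
    by_cases hx : x ∈ A
    · simp [hx, hA hxy hx]
    · by_cases hy : y ∈ A <;> simp [hx, hy]
  have hg : Monotone (fun ω => if ω ∈ B then (1:ℝ) else 0) := by
    intro x y hxy
    by_cases hx : x ∈ B
    · simp [hx, hB hxy hx]
    · by_cases hy : y ∈ B <;> simp [hx, hy]
  have := hG inferInstance _ _ hf hg
  have hA' : ∑ ω, (if ω ∈ A then (1:ℝ) else 0) = A.card := by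
    rw [Finset.sum_boole]; congr 1; simp [Finset.filter_mem_eq_inter]
  have hB' : ∑ ω, (if ω ∈ B then (1:ℝ) else 0) = B.card := by
    rw [Finset.sum_boole]; congr 1; simp [Finset.filter_mem_eq_inter]
  have hAB : ∑ ω, (if ω ∈ A then (1:ℝ) else 0) * (if ω ∈ B then (1:ℝ) else 0)
      = ((A ∩ B).card : ℝ) := by
    have : ∀ ω, (if ω ∈ A then (1:ℝ) else 0) * (if ω ∈ B then (1:ℝ) else 0)
        = if ω ∈ A ∩ B then (1:ℝ) else 0 := by
      intro ω
      by_cases h1 : ω ∈ A <;> by_cases h2 : ω ∈ B <;> simp [h1, h2, Finset.mem_inter]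
    rw [Finset.sum_congr rfl (fun ω _ => this ω), Finset.sum_boole]
    congr 1
    congr 1
    ext ω
    simp [Finset.mem_inter]
  rw [hA', hB', hAB] at this
  exact this

open scoped Classical in
lemma harris_family {Ω ι : Type*} [Fintype Ω] [Preorder Ω] (hG : GoodSpace Ω)
    (T : Finset ι) (A : ι → Finset Ω)
    (hA : ∀ x ∈ T, ∀ ⦃a b : Ω⦄, a ≤ b → a ∈ A x → b ∈ A x) :
    (Fintype.card Ω : ℝ) * ∏ x ∈ T, ((A x).card : ℝ) ≤
      (((Finset.univ.filter fun ω => ∀ x ∈ T, ω ∈ A x).card : ℝ)) *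
        (Fintype.card Ω : ℝ) ^ T.card := by
  induction T using Finset.induction_on with
  | empty => simp
  | @insert a T' ha ih =>
    have hIT : ∀ ⦃x y : Ω⦄, x ≤ y →
        x ∈ (Finset.univ.filter fun ω => ∀ z ∈ T', ω ∈ A z) →
        y ∈ (Finset.univ.filter fun ω => ∀ z ∈ T', ω ∈ A z) := by
      intro x y hxy hx
      simp only [Finset.mem_filter, Finset.mem_univ, true_and] at hx ⊢
      exact fun z hz => hA z (Finset.mem_insert_of_mem hz) hxy (hx z hz)
    have hIeq : (Finset.univ.filter fun ω => ∀ z ∈ insert a T', ω ∈ A z)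
        = A a ∩ (Finset.univ.filter fun ω => ∀ z ∈ T', ω ∈ A z) := by
      ext ω
      simp only [Finset.mem_filter, Finset.mem_univ, true_and, Finset.mem_inter,
        Finset.mem_insert]
      constructor
      · intro h; exact ⟨h a (Or.inl rfl), fun z hz => h z (Or.inr hz)⟩
      · rintro ⟨h1, h2⟩ z (rfl | hz)
        · exact h1
        · exact h2 z hz
    have ih' := ih (fun x hx => hA x (Finset.mem_insert_of_mem hx))
    have h2 := harris_two hG (hA a (Finset.mem_insert_self a T')) hIT
    set C := (Fintype.card Ω : ℝ) with hC
    have hCnn : (0:ℝ) ≤ C := by positivity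
    calc C * ∏ x ∈ insert a T', ((A x).card : ℝ)
        = ((A a).card : ℝ) * (C * ∏ x ∈ T', ((A x).card : ℝ)) := by
          rw [Finset.prod_insert ha]; ring
      _ ≤ ((A a).card : ℝ) *
          (((Finset.univ.filter fun ω => ∀ z ∈ T', ω ∈ A z).card : ℝ) * C ^ T'.card) := by
          apply mul_le_mul_of_nonneg_left ih' (by positivity)
      _ = (((A a).card : ℝ) * ((Finset.univ.filter fun ω => ∀ z ∈ T', ω ∈ A z).card : ℝ))
            * C ^ T'.card := by ring
      _ ≤ (C * ((A a ∩ (Finset.univ.filter fun ω => ∀ z ∈ T', ω ∈ A z)).card : ℝ))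
            * C ^ T'.card := by
          apply mul_le_mul_of_nonneg_right h2 (by positivity)
      _ = (((Finset.univ.filter fun ω => ∀ z ∈ insert a T', ω ∈ A z).card : ℝ))
            * C ^ (insert a T').card := by
          rw [hIeq, Finset.card_insert_of_notMem ha, pow_succ]
          ring

lemma pf_identity (k : ℕ) : ∀ x : ℝ, 0 < x →
    ∑ j ∈ range (k+1), (-1:ℝ)^j * (k.choose j) / (x + j) =
      (k.factorial : ℝ) / ∏ j ∈ range (k+1), (x + j) := by
  induction k with
  | zero => intro x hx; simp
  | succ k ih =>
    intro x hx
    have hP : (0:ℝ) < ∏ j ∈ range (k+1), (x + j) :=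
      Finset.prod_pos fun j _ => by positivity
    have hQ : (0:ℝ) < ∏ j ∈ range (k+1), (x + 1 + j) :=
      Finset.prod_pos fun j _ => by positivity
    -- step 1 : recursion for the sum
    have hsum : ∑ j ∈ range (k+2), (-1:ℝ)^j * ((k+1).choose j) / (x + j)
        = (∑ j ∈ range (k+1), (-1:ℝ)^j * (k.choose j) / (x + j))
          - ∑ j ∈ range (k+1), (-1:ℝ)^j * (k.choose j) / ((x+1) + j) := by
      rw [Finset.sum_range_succ' (fun j => (-1:ℝ)^j * ((k+1).choose j) / (x + j)) (k+1)]
      have hterm : ∀ i : ℕ, (-1:ℝ)^(i+1) * ((k+1).choose (i+1)) / (x + ((i+1:ℕ):ℝ))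
          = (-1)^(i+1) * (k.choose i) / (x + ((i+1:ℕ):ℝ))
            + (-1)^(i+1) * (k.choose (i+1)) / (x + ((i+1:ℕ):ℝ)) := by
        intro i
        rw [Nat.choose_succ_succ]
        push_cast
        ring
      rw [Finset.sum_congr rfl (fun i _ => hterm i), Finset.sum_add_distrib]
      have h2 : ∑ i ∈ range (k+1), (-1:ℝ)^(i+1) * (k.choose i) / (x + ((i+1:ℕ):ℝ))
          = - ∑ j ∈ range (k+1), (-1:ℝ)^j * (k.choose j) / ((x+1) + j) := by
        rw [← Finset.sum_neg_distrib]
        apply Finset.sum_congr rfl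
        intro i _
        have : (x + ((i+1:ℕ):ℝ)) = (x + 1 + (i:ℝ)) := by push_cast; ring
        rw [this]
        push_cast
        ring
      have h3 : ∑ i ∈ range (k+1), (-1:ℝ)^(i+1) * (k.choose (i+1)) / (x + ((i+1:ℕ):ℝ))
          = (∑ j ∈ range (k+1), (-1:ℝ)^j * (k.choose j) / (x + j)) - 1/x := by
        have := Finset.sum_range_succ' (fun j => (-1:ℝ)^j * (k.choose j) / (x + j)) k
        have hlast : ∑ j ∈ range (k+2), (-1:ℝ)^j * (k.choose j) / (x + j)
            = ∑ j ∈ range (k+1), (-1:ℝ)^j * (k.choose j) / (x + j) := by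
          rw [Finset.sum_range_succ]
          simp [Nat.choose_succ_self]
        have h4 := Finset.sum_range_succ' (fun j => (-1:ℝ)^j * (k.choose j) / (x + j)) (k+1)
        rw [hlast] at h4
        have : ∑ i ∈ range (k+1), (-1:ℝ)^(i+1) * (k.choose (i+1)) / (x + ((i+1:ℕ):ℝ))
            = ∑ j ∈ range (k+1), (-1:ℝ)^j * (k.choose j) / (x + j)
              - (-1:ℝ)^0 * (k.choose 0) / (x + 0) := by
          rw [h4]; push_cast; ring
        rw [this]
        simp
      rw [h2, h3]
      simp only [Nat.choose_zero_right, Nat.cast_one, Nat.cast_zero, add_zero, one_mul]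
      ring
    rw [hsum, ih x hx, ih (x+1) (by positivity)]
    -- step 2 : algebra
    have hfact : ∏ j ∈ range (k+2), (x + j) = x * ∏ j ∈ range (k+1), (x + 1 + j) := by
      rw [Finset.prod_range_succ' (fun j => (x + j : ℝ)) (k+1)]
      simp only [Nat.cast_add, Nat.cast_one, Nat.cast_zero, add_zero]
      rw [mul_comm]
      congr 1
      apply Finset.prod_congr rfl
      intro j _
      push_cast
      ring
    have hfact2 : ∏ j ∈ range (k+2), (x + j) = (∏ j ∈ range (k+1), (x + j)) * (x + (k+1)) := by
      rw [Finset.prod_range_succ]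
      push_cast
      ring_nf
    have hR : (0:ℝ) < ∏ j ∈ range (k+2), (x + j) :=
      Finset.prod_pos fun j _ => by positivity
    rw [eq_div_iff (ne_of_gt hR)]
    have e1 : ((k.factorial : ℝ) / ∏ j ∈ range (k+1), (x + j)) * ∏ j ∈ range (k+2), (x+j)
        = (k.factorial : ℝ) * (x + (k+1)) := by
      rw [hfact2]; field_simp
    have e2 : ((k.factorial : ℝ) / ∏ j ∈ range (k+1), (x + 1 + j)) * ∏ j ∈ range (k+2), (x+j)
        = (k.factorial : ℝ) * x := by
      rw [hfact]; field_simp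
    rw [sub_mul, e1, e2, Nat.factorial_succ]
    push_cast
    ring

lemma F_integral (m k : ℕ) (hm : 1 ≤ m) :
    ∫ s in (0:ℝ)..1, (1 - s^m)^k
      = ∏ i ∈ range k, ((m*(i+1) : ℕ) : ℝ) / ((m*(i+1) : ℕ) + 1) := by
  have hmR : (0:ℝ) < m := by exact_mod_cast hm
  -- binomial expansion
  have hexp : ∀ s : ℝ, (1 - s^m)^k
      = ∑ j ∈ range (k+1), (-1:ℝ)^j * (k.choose j) * s^(m*j) := by
    intro s
    have : (1 - s^m) = (-(s^m) + 1) := by ring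
    rw [this, add_pow]
    apply Finset.sum_congr rfl
    intro j _
    rw [one_pow, neg_pow, pow_mul]
    ring
  rw [intervalIntegral.integral_congr (g := fun s => ∑ j ∈ range (k+1),
      (-1:ℝ)^j * (k.choose j) * s^(m*j)) (fun s _ => hexp s)]
  rw [intervalIntegral.integral_finset_sum (fun j _ =>
    (Continuous.intervalIntegrable (by continuity) 0 1))]
  have hterm : ∀ j ∈ range (k+1), ∫ s in (0:ℝ)..1, (-1:ℝ)^j * (k.choose j) * s^(m*j)
      = (-1:ℝ)^j * (k.choose j) * (1 / (m*j+1)) := by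
    intro j _
    rw [intervalIntegral.integral_const_mul, integral_pow]
    norm_num
  rw [Finset.sum_congr rfl hterm]
  -- relate to partial fractions at x = 1/m
  have hx : (0:ℝ) < 1/m := by positivity
  have hid := pf_identity k (1/m) hx
  have hconv : ∑ j ∈ range (k+1), (-1:ℝ)^j * (k.choose j) * (1 / (m*j+1))
      = (1/m) * ∑ j ∈ range (k+1), (-1:ℝ)^j * (k.choose j) / ((1/m) + j) := by
    rw [Finset.mul_sum]
    apply Finset.sum_congr rfl
    intro j _
    have h1 : ((1:ℝ)/m + j) = (m*j+1)/m := by field_simp; ring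
    rw [h1]
    have h2 : (0:ℝ) < m*j+1 := by positivity
    field_simp
  rw [hconv, hid]
  -- final algebra
  push_cast
  have hD : (0:ℝ) < ∏ i ∈ range k, ((m:ℝ)*(i+1)+1) :=
    Finset.prod_pos fun i _ => by positivity
  have hterm2 : ∀ j ∈ range (k+1), ((1:ℝ)/m + j) = ((m:ℝ)*j+1)/m := by
    intro j _
    field_simp
    ring
  have e1 : ∏ j ∈ range (k+1), ((1:ℝ)/m + j)
      = (∏ j ∈ range (k+1), ((m:ℝ)*j+1)) / m^(k+1) := by
    rw [Finset.prod_congr rfl hterm2, Finset.prod_div_distrib, Finset.prod_const,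
      Finset.card_range]
  have e2 : ∏ j ∈ range (k+1), ((m:ℝ)*j+1) = ∏ i ∈ range k, ((m:ℝ)*(i+1)+1) := by
    rw [Finset.prod_range_succ' (fun j => ((m:ℝ)*j+1)) k]
    push_cast
    simp
  have e3 : (k.factorial : ℝ) = ∏ i ∈ range k, ((i:ℝ)+1) := by
    rw [← Finset.prod_range_add_one_eq_factorial]
    push_cast
    rfl
  have e4 : ∏ i ∈ range k, ((m:ℝ)*(i+1)) / ((m:ℝ)*(i+1)+1)
      = ((m:ℝ)^k * ∏ i ∈ range k, ((i:ℝ)+1)) / ∏ i ∈ range k, ((m:ℝ)*(i+1)+1) := by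
    rw [Finset.prod_div_distrib]
    congr 1
    rw [Finset.prod_mul_distrib, Finset.prod_const, Finset.card_range]
  have goalr : (1/(m:ℝ)) * ((k.factorial : ℝ) / ((∏ i ∈ range k, ((m:ℝ)*(i+1)+1)) / m^(k+1)))
      = ∏ i ∈ range k, ((m:ℝ)*(i+1)) / ((m:ℝ)*(i+1)+1) := by
    rw [e4, e3]
    field_simp
    ring
  calc (1/(m:ℝ)) * ((k.factorial : ℝ) / ∏ j ∈ range (k+1), ((1:ℝ)/m + j))
      = (1/(m:ℝ)) * ((k.factorial : ℝ) / ((∏ i ∈ range k, ((m:ℝ)*(i+1)+1)) / m^(k+1))) := by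
        rw [e1, e2]
    _ = ∏ i ∈ range k, ((m:ℝ)*(i+1)) / ((m:ℝ)*(i+1)+1) := goalr

lemma riemann_bound (m k N : ℕ) (hm : 1 ≤ m) (hk : 1 ≤ k) (hN : 0 < N) :
    (∏ i ∈ range k, ((m*(i+1) : ℕ) : ℝ) / ((m*(i+1) : ℕ) + 1)) - 1/N
      ≤ (1/N) * ∑ t ∈ range N, (1 - (((t:ℝ)+1)/N)^m)^k := by
  set F : ℝ → ℝ := fun s => (1 - s^m)^k with hF
  have hNR : (0:ℝ) < N := by exact_mod_cast hN
  have hcont : Continuous F := by fun_prop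
  have hmono : ∀ a b : ℝ, 0 ≤ a → a ≤ b → b ≤ 1 → F b ≤ F a := by
    intro a b ha hab hb1
    apply pow_le_pow_left₀ (by nlinarith [pow_le_one₀ (le_trans ha hab) hb1 (n := m)])
    have : a^m ≤ b^m := pow_le_pow_left₀ ha hab m
    linarith
  -- split [0,1] into N intervals
  have hsplit : ∑ t ∈ range N, ∫ s in ((t:ℝ)/N)..(((t:ℝ)+1)/N), F s = ∫ s in (0:ℝ)..1, F s := by
    have := intervalIntegral.sum_integral_adjacent_intervals
      (a := fun t : ℕ => (t:ℝ)/N) (f := F) (μ := MeasureTheory.volume) (n := N)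
      (fun t _ => hcont.intervalIntegrable _ _)
    simp only [Nat.cast_zero, zero_div] at this
    rw [div_self (ne_of_gt hNR)] at this
    rw [← this]
    apply Finset.sum_congr rfl
    intro t _
    congr 1
    push_cast
    ring
  have hstep : ∀ t ∈ range N, ∫ s in ((t:ℝ)/N)..(((t:ℝ)+1)/N), F s ≤ (1/N) * F ((t:ℝ)/N) := by
    intro t ht
    have htN : (t:ℝ) + 1 ≤ N := by
      have := Finset.mem_range.1 ht
      exact_mod_cast Nat.succ_le_of_lt this
    have hle : (t:ℝ)/N ≤ ((t:ℝ)+1)/N := by gcongr; linarith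
    have hbound : ∀ x ∈ Set.Icc ((t:ℝ)/N) (((t:ℝ)+1)/N), F x ≤ F ((t:ℝ)/N) := by
      intro x hx
      apply hmono ((t:ℝ)/N) x (by positivity) hx.1
      calc x ≤ ((t:ℝ)+1)/N := hx.2
        _ ≤ 1 := by rw [div_le_one hNR]; exact htN
    have := intervalIntegral.integral_mono_on (μ := MeasureTheory.volume) hle
      (hcont.intervalIntegrable _ _) (intervalIntegrable_const) hbound
    rw [intervalIntegral.integral_const] at this
    have heq : (((t:ℝ)+1)/N - (t:ℝ)/N) • F ((t:ℝ)/N) = (1/N) * F ((t:ℝ)/N) := by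
      rw [smul_eq_mul]
      congr 1
      field_simp
      ring
    rw [heq] at this
    exact this
  have h2 : ∫ s in (0:ℝ)..1, F s ≤ (1/N) * ∑ t ∈ range N, F ((t:ℝ)/N) := by
    rw [← hsplit, Finset.mul_sum]
    exact Finset.sum_le_sum hstep
  have h3 : ∑ t ∈ range N, F ((t:ℝ)/N) = ∑ t ∈ range N, F (((t:ℝ)+1)/N) + 1 := by
    have htel := Finset.sum_range_sub' (fun t : ℕ => F ((t:ℝ)/N)) N
    have e0 : F (((0:ℕ):ℝ)/N) = 1 := by
      simp only [hF, Nat.cast_zero, zero_div]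
      rw [zero_pow (by omega : m ≠ 0)]
      norm_num
    have e1 : F (((N:ℕ):ℝ)/N) = 0 := by
      simp only [hF]
      rw [div_self (ne_of_gt hNR), one_pow]
      rw [sub_self, zero_pow (by omega : k ≠ 0)]
    rw [Finset.sum_sub_distrib] at htel
    have hcast : ∀ t : ℕ, F (((t+1:ℕ):ℝ)/N) = F (((t:ℝ)+1)/N) := by
      intro t; push_cast; rfl
    rw [Finset.sum_congr rfl (fun t _ => hcast t)] at htel
    rw [e0, e1] at htel
    linarith
  have h1 := F_integral m k hm
  rw [h3] at h2
  have : (∏ i ∈ range k, ((m*(i+1) : ℕ) : ℝ) / ((m*(i+1) : ℕ) + 1))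
      ≤ (1/N) * (∑ t ∈ range N, F (((t:ℝ)+1)/N) + 1) := by
    rw [← h1]
    exact h2
  have hexpand : (1/(N:ℝ)) * (∑ t ∈ range N, F (((t:ℝ)+1)/N) + 1)
      = (1/N) * ∑ t ∈ range N, F (((t:ℝ)+1)/N) + 1/N := by ring
  rw [hexpand] at this
  linarith

lemma sum_pow_ge {V : Type*} [Fintype V] (r : ℝ) (hr0 : 0 ≤ r) (hr1 : r ≤ 1)
    (d : V → ℕ) (k : ℕ) (hk : 0 < k) (hd : ∑ v, d v = k * Fintype.card V) :
    (Fintype.card V : ℝ) * r ^ k ≤ ∑ v, r ^ (d v) := by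
  rcases eq_or_lt_of_le hr0 with h0 | hpos
  · rw [← h0, zero_pow hk.ne', mul_zero]
    exact Finset.sum_nonneg fun v _ => pow_nonneg le_rfl _
  · have hlog : Real.log r ≤ 0 := Real.log_nonpos hpos.le hr1
    have key : ∀ v : V, r ^ k * (1 + ((d v : ℝ) - k) * Real.log r) ≤ r ^ (d v) := by
      intro v
      have h1 : r ^ (d v) = r ^ k * Real.exp (((d v : ℝ) - k) * Real.log r) := by
        have e : ∀ n : ℕ, Real.exp ((n:ℝ) * Real.log r) = r ^ n := fun n => by
          rw [Real.exp_nat_mul, Real.exp_log hpos]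
        have hsplit2 : ((d v : ℝ) - k) * Real.log r
            = (d v : ℝ) * Real.log r + (-((k:ℝ) * Real.log r)) := by ring
        rw [hsplit2, Real.exp_add, Real.exp_neg, e, e]
        have hrk : r ^ k ≠ 0 := pow_ne_zero _ hpos.ne'
        field_simp
      rw [h1]
      have h2 : ((d v : ℝ) - k) * Real.log r + 1 ≤ Real.exp (((d v : ℝ) - k) * Real.log r) :=
        Real.add_one_le_exp _
      have h3 : (0:ℝ) ≤ r ^ k := pow_nonneg hpos.le k
      nlinarith
    have hsum : ∑ v : V, ((d v : ℝ) - k) = 0 := by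
      rw [Finset.sum_sub_distrib, Finset.sum_const, Finset.card_univ]
      have h5 : ∑ v : V, (d v : ℝ) = ((k * Fintype.card V : ℕ) : ℝ) := by
        rw [← hd]; push_cast; rfl
      rw [h5]
      push_cast
      ring
    have hexp : ∀ v : V, r^k * (1 + ((d v : ℝ) - k) * Real.log r)
        = r^k + (r^k * Real.log r) * ((d v : ℝ) - k) := fun v => by ring
    calc (Fintype.card V : ℝ) * r ^ k
        = ∑ v : V, r ^ k * (1 + ((d v : ℝ) - k) * Real.log r) := by
          rw [Finset.sum_congr rfl (fun v _ => hexp v), Finset.sum_add_distrib,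
            Finset.sum_const, Finset.card_univ, ← Finset.mul_sum, hsum]
          simp [nsmul_eq_mul]
      _ ≤ ∑ v, r ^ (d v) := Finset.sum_le_sum fun v _ => key v

open scoped Classical in
lemma card_fiber_eq {V : Type*} [DecidableEq V] [Fintype V] {N : ℕ} (v : V)
    (A : Finset (V → Fin N))
    (hA : ∀ ℓ ℓ' : V → Fin N, (∀ w, w ≠ v → ℓ w = ℓ' w) → (ℓ ∈ A ↔ ℓ' ∈ A)) (t : Fin N) :
    A.card = N * (A.filter fun ℓ => ℓ v = t).card := by
  have hbij : A.card = ((A.filter fun ℓ => ℓ v = t) ×ˢ (Finset.univ : Finset (Fin N))).card := by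
    refine Finset.card_bij' (fun ℓ _ => (Function.update ℓ v t, ℓ v))
      (fun p _ => Function.update p.1 v p.2) ?hi ?hj ?li ?ri
    case hi =>
      intro ℓ hℓ
      rw [Finset.mem_product]
      constructor
      · rw [Finset.mem_filter]
        refine ⟨?_, Function.update_self v t ℓ⟩
        exact (hA ℓ (Function.update ℓ v t)
          (fun w hw => (Function.update_of_ne hw t ℓ).symm)).1 hℓ
      · exact Finset.mem_univ _
    case hj =>
      intro p hp
      rw [Finset.mem_product, Finset.mem_filter] at hp
      exact (hA p.1 (Function.update p.1 v p.2)
        (fun w hw => (Function.update_of_ne hw p.2 p.1).symm)).1 hp.1.1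
    case li =>
      intro ℓ hℓ
      show Function.update (Function.update ℓ v t) v (ℓ v) = ℓ
      rw [Function.update_idem, Function.update_eq_self]
    case ri =>
      intro p hp
      rw [Finset.mem_product, Finset.mem_filter] at hp
      have h1 : p.1 v = t := hp.1.2
      have : Function.update p.1 v t = p.1 := by
        rw [← h1, Function.update_eq_self]
      rw [Prod.ext_iff]
      exact ⟨by simp [this], by simp⟩
  rw [hbij, Finset.card_product, Finset.card_univ, Fintype.card_fin]
  ring

open scoped Classical in
lemma card_box {V : Type*} [DecidableEq V] [Fintype V] {N : ℕ} (B : Finset V) (t : Fin N) :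
    (Finset.univ.filter fun ℓ : V → Fin N => ∀ a ∈ B, ℓ a ≤ t).card
      = ((t:ℕ)+1)^B.card * N^(Fintype.card V - B.card) := by
  have hset : (Finset.univ.filter fun ℓ : V → Fin N => ∀ a ∈ B, ℓ a ≤ t)
      = Fintype.piFinset (fun a => if a ∈ B then Finset.Iic t else Finset.univ) := by
    ext ℓ
    rw [Finset.mem_filter, Fintype.mem_piFinset]
    constructor
    · intro ⟨_, h⟩ a
      by_cases ha : a ∈ B
      · simp [ha, Finset.mem_Iic, h a ha]
      · simp [ha]
    · intro h
      refine ⟨Finset.mem_univ _, fun a ha => ?_⟩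
      have := h a
      rw [if_pos ha, Finset.mem_Iic] at this
      exact this
  rw [hset, Fintype.card_piFinset]
  have : ∀ a : V, ((if a ∈ B then Finset.Iic t else Finset.univ).card)
      = if a ∈ B then (t:ℕ)+1 else N := by
    intro a
    by_cases ha : a ∈ B <;> simp [ha, Fin.card_Iic]
  rw [Finset.prod_congr rfl (fun a _ => this a), Finset.prod_ite, Finset.prod_const,
    Finset.prod_const, Finset.filter_univ_mem]
  congr 1
  have : Finset.univ.filter (fun a => a ∉ B) = Bᶜ := by
    ext a; simp [Finset.mem_compl]
  rw [this, Finset.card_compl]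

open scoped Classical in
lemma per_vt_bound {V : Type*} [Fintype V] [DecidableEq V] {N n m : ℕ}
    (hn : Fintype.card V = n) (hN : 0 < N)
    (Np : V → Finset V) (v : V) (hB : ∀ x, v ∈ Np x → ((Np x).erase v).card = m)
    (t : Fin N) :
    ((N:ℝ)^n) * (1 - (((t:ℕ):ℝ)+1)^m / (N:ℝ)^m) ^ ((Finset.univ.filter fun x => v ∈ Np x).card)
      ≤ ((Finset.univ.filter
          (fun ℓ : V → Fin N => ∀ x : V, v ∈ Np x → ∃ a ∈ (Np x).erase v, t < ℓ a)).card : ℝ) := by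
  set T : Finset V := Finset.univ.filter fun x => v ∈ Np x with hT
  set E : V → Finset (V → Fin N) :=
    fun x => Finset.univ.filter (fun ℓ : V → Fin N => ∃ a ∈ (Np x).erase v, t < ℓ a) with hE
  set rT : ℝ := 1 - (((t:ℕ):ℝ)+1)^m / (N:ℝ)^m with hrT
  have hCΩ : (Fintype.card (V → Fin N) : ℝ) = (N:ℝ)^n := by
    rw [Fintype.card_fun, Fintype.card_fin, hn]; push_cast; rfl
  have hQeq : (Finset.univ.filter
      (fun ℓ : V → Fin N => ∀ x : V, v ∈ Np x → ∃ a ∈ (Np x).erase v, t < ℓ a))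
      = Finset.univ.filter (fun ℓ => ∀ x ∈ T, ℓ ∈ E x) := by
    apply Finset.filter_congr
    intro ℓ _
    simp only [hT, hE, Finset.mem_filter, Finset.mem_univ, true_and]
  have hupper : ∀ x ∈ T, ∀ ⦃a b : V → Fin N⦄, a ≤ b → a ∈ E x → b ∈ E x := by
    intro x _ a b hab ha
    rw [hE, Finset.mem_filter] at ha ⊢
    obtain ⟨_, w, hw, hlt⟩ := ha
    exact ⟨Finset.mem_univ _, w, hw, lt_of_lt_of_le hlt (hab w)⟩
  have hEcard : ∀ x ∈ T, ((E x).card : ℝ) = (N:ℝ)^n * rT := by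
    intro x hx
    have hvx : v ∈ Np x := by
      rw [hT, Finset.mem_filter] at hx; exact hx.2
    have hBc : ((Np x).erase v).card = m := hB x hvx
    have hmn : m ≤ n := by
      rw [← hBc, ← hn]; exact Finset.card_le_univ _
    have hcompl : (Finset.univ.filter
        (fun ℓ : V → Fin N => ¬ ∃ a ∈ (Np x).erase v, t < ℓ a))
        = Finset.univ.filter (fun ℓ : V → Fin N => ∀ a ∈ (Np x).erase v, ℓ a ≤ t) := by
      apply Finset.filter_congr
      intro ℓ _
      push_neg
      simp only [not_lt]
    have hsum := Finset.card_filter_add_card_filter_not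
      (s := (Finset.univ : Finset (V → Fin N)))
      (fun ℓ : V → Fin N => ∃ a ∈ (Np x).erase v, t < ℓ a)
    rw [hcompl] at hsum
    have hbox := card_box (N := N) ((Np x).erase v) t
    rw [hBc, hn] at hbox
    have hcard2 : (E x).card + ((t:ℕ)+1)^m * N^(n-m) = N^n := by
      rw [hE]
      rw [← hbox]
      rw [hsum]
      rw [Finset.card_univ, Fintype.card_fun, Fintype.card_fin, hn]
    have hNm : ((N:ℝ))^(n-m) * (N:ℝ)^m = (N:ℝ)^n := by
      rw [← pow_add, Nat.sub_add_cancel hmn]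
    have hcastR : ((E x).card : ℝ) = (N:ℝ)^n - (((t:ℕ):ℝ)+1)^m * (N:ℝ)^(n-m) := by
      have := congrArg (fun q : ℕ => (q : ℝ)) hcard2
      push_cast at this
      linarith
    rw [hcastR, hrT]
    have hNmpos : (0:ℝ) < (N:ℝ)^m := by positivity
    have hdiv : (N:ℝ)^(n-m) = (N:ℝ)^n / (N:ℝ)^m := by
      rw [eq_div_iff hNmpos.ne']; exact hNm
    rw [hdiv]
    ring
  have hharris := harris_family (goodSpace_pi N V) T E hupper
  rw [Finset.prod_congr rfl hEcard] at hharris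
  rw [Finset.prod_const] at hharris
  rw [hCΩ] at hharris
  have hpow : ((N:ℝ)^n * rT)^T.card = ((N:ℝ)^n)^T.card * rT^T.card := mul_pow _ _ _
  rw [hpow] at hharris
  have hposc : (0:ℝ) < ((N:ℝ)^n)^T.card := by positivity
  rw [hQeq]
  apply le_of_mul_le_mul_right _ hposc
  have hre : (N:ℝ)^n * rT^T.card * ((N:ℝ)^n)^T.card
      = (N:ℝ)^n * (((N:ℝ)^n)^T.card * rT^T.card) := by ring
  rw [hre]
  convert hharris using 4
  · rfl
  · ext ℓ
    simp only [Finset.mem_filter]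

open scoped Classical in
lemma per_v_bound {V : Type*} [Fintype V] [DecidableEq V] {N n m : ℕ}
    (hn : Fintype.card V = n) (hN : 0 < N)
    (Np : V → Finset V) (v : V) (hB : ∀ x, v ∈ Np x → ((Np x).erase v).card = m) :
    ∑ t : Fin N, ((N:ℝ)^n) *
        (1 - (((t:ℕ):ℝ)+1)^m / (N:ℝ)^m) ^ ((Finset.univ.filter fun x => v ∈ Np x).card)
      ≤ (N:ℝ) * ((Finset.univ.filter
          (fun ℓ : V → Fin N => ∀ x : V, v ∈ Np x → ∃ a ∈ Np x, a ≠ v ∧ ℓ v < ℓ a)).card : ℝ) := by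
  set W : Finset (V → Fin N) := Finset.univ.filter
    (fun ℓ : V → Fin N => ∀ x : V, v ∈ Np x → ∃ a ∈ Np x, a ≠ v ∧ ℓ v < ℓ a) with hW
  set Q : Fin N → Finset (V → Fin N) := fun t => Finset.univ.filter
    (fun ℓ : V → Fin N => ∀ x : V, v ∈ Np x → ∃ a ∈ (Np x).erase v, t < ℓ a) with hQ
  have hfib : W.card = ∑ t : Fin N, ((W.filter (fun ℓ => ℓ v = t)).card) :=
    Finset.card_eq_sum_card_fiberwise (f := fun ℓ : V → Fin N => ℓ v) (fun ℓ _ => Finset.mem_univ _)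
  have hWQ : ∀ t : Fin N, W.filter (fun ℓ => ℓ v = t) = (Q t).filter (fun ℓ => ℓ v = t) := by
    intro t
    ext ℓ
    rw [hW, hQ, Finset.mem_filter, Finset.mem_filter, Finset.mem_filter, Finset.mem_filter]
    simp only [Finset.mem_univ, true_and]
    constructor
    · rintro ⟨hsav, hvt⟩
      refine ⟨fun x hx => ?_, hvt⟩
      obtain ⟨a, ha, hne, hlt⟩ := hsav x hx
      exact ⟨a, Finset.mem_erase.2 ⟨hne, ha⟩, by rwa [← hvt]⟩
    · rintro ⟨hq, hvt⟩
      refine ⟨fun x hx => ?_, hvt⟩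
      obtain ⟨a, ha, hlt⟩ := hq x hx
      rw [Finset.mem_erase] at ha
      exact ⟨a, ha.2, ha.1, by rwa [hvt]⟩
  have hQfib : ∀ t : Fin N, (Q t).card = N * ((Q t).filter (fun ℓ => ℓ v = t)).card := by
    intro t
    apply card_fiber_eq v (Q t) _ t
    intro ℓ ℓ' hagree
    rw [hQ, Finset.mem_filter, Finset.mem_filter]
    simp only [Finset.mem_univ, true_and]
    constructor
    · intro h x hx
      obtain ⟨a, ha, hlt⟩ := h x hx
      have hav : a ≠ v := (Finset.mem_erase.1 ha).1
      exact ⟨a, ha, by rwa [← hagree a hav]⟩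
    · intro h x hx
      obtain ⟨a, ha, hlt⟩ := h x hx
      have hav : a ≠ v := (Finset.mem_erase.1 ha).1
      exact ⟨a, ha, by rwa [hagree a hav]⟩
  have hsum : (N:ℝ) * (W.card : ℝ) = ∑ t : Fin N, ((Q t).card : ℝ) := by
    rw [hfib]
    push_cast
    rw [Finset.mul_sum]
    apply Finset.sum_congr rfl
    intro t _
    rw [hWQ t]
    rw [hQfib t]
    push_cast
    ring
  rw [hsum]
  apply Finset.sum_le_sum
  intro t _
  exact per_vt_bound hn hN Np v hB t

lemma c_eq (m : ℕ) (hm : 1 ≤ m) :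
    (Nat.factorial (m+1) : ℝ) / ∏ i ∈ range (m+1), (((m+1):ℝ)/(((m+1):ℝ)-1) + i)
      = ∏ i ∈ range (m+1), ((m*(i+1) : ℕ) : ℝ) / (((m*(i+1) : ℕ) : ℝ) + 1) := by
  have hmR : (0:ℝ) < m := by exact_mod_cast hm
  have hD : (0:ℝ) < ∏ i ∈ range (m+1), ((m:ℝ)*(i+1)+1) :=
    Finset.prod_pos fun i _ => by positivity
  have hterm : ∀ i ∈ range (m+1), (((m+1):ℝ)/(((m+1):ℝ)-1) + i) = ((m:ℝ)*(i+1)+1)/m := by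
    intro i _
    have h1 : ((m+1):ℝ) - 1 = m := by ring
    rw [h1]
    field_simp
    ring
  rw [Finset.prod_congr rfl hterm, Finset.prod_div_distrib, Finset.prod_const, Finset.card_range]
  have hfac : ((m+1).factorial : ℝ) = ∏ i ∈ range (m+1), ((i:ℝ)+1) := by
    rw [← Finset.prod_range_add_one_eq_factorial]
    push_cast
    rfl
  have hRHS : ∏ i ∈ range (m+1), ((m*(i+1) : ℕ) : ℝ) / (((m*(i+1) : ℕ) : ℝ) + 1)
      = ((m:ℝ)^(m+1) * ∏ i ∈ range (m+1), ((i:ℝ)+1)) / ∏ i ∈ range (m+1), ((m:ℝ)*(i+1)+1) := by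
    push_cast
    rw [Finset.prod_div_distrib]
    congr 1
    rw [Finset.prod_mul_distrib, Finset.prod_const, Finset.card_range]
  rw [hRHS, hfac]
  field_simp

/-- Total domination bound for bipartite graphs with equal parts and minimum degree at least `k`. -/
theorem total_domination_balanced_bipartite {V : Type*} [Fintype V] [DecidableEq V]
    (G : SimpleGraph V) [DecidableRel G.Adj] (k : ℕ) (hk : 1 < k)
    (X : Finset V) (hbip : ∀ ⦃u v : V⦄, G.Adj u v → (u ∈ X ↔ v ∉ X))
    (hcard : 2 * X.card = Fintype.card V)
    (hdeg : ∀ v : V, k ≤ G.degree v) :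
    ∃ S : Finset V, (∀ v : V, ∃ u ∈ S, G.Adj v u) ∧
      (S.card : ℝ) ≤ (Fintype.card V : ℝ) *
        (1 - (Nat.factorial k : ℝ) / ∏ i ∈ Finset.range k, ((k : ℝ) / ((k : ℝ) - 1) + i)) := by
  classical
  obtain ⟨m, rfl⟩ : ∃ m, k = m + 1 := ⟨k - 1, by omega⟩
  have hm1 : 1 ≤ m := by omega
  set k := m + 1 with hkdef
  set n := Fintype.card V with hn
  -- choose the k-subsets of neighborhoods
  have hex : ∀ x : V, ∃ s : Finset V, s ⊆ G.neighborFinset x ∧ s.card = k := by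
    intro x
    obtain ⟨s, hs1, hs2⟩ := Finset.exists_subset_card_eq (s := G.neighborFinset x) (n := k)
      (by rw [G.card_neighborFinset_eq_degree]; exact hdeg x)
    exact ⟨s, hs1, hs2⟩
  choose Np hNp1 hNp2 using hex
  have hB : ∀ v x : V, v ∈ Np x → ((Np x).erase v).card = m := by
    intro v x hv
    rw [Finset.card_erase_of_mem hv, hNp2, hkdef]
    omega
  set d : V → ℕ := fun v => (Finset.univ.filter fun x => v ∈ Np x).card with hd
  have hdsum : ∑ v, d v = k * n := by
    have h1 : ∀ v : V, d v = ∑ x : V, if v ∈ Np x then 1 else 0 := fun v =>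
      Finset.card_filter _ _
    have h2 : ∀ x : V, (∑ v : V, if v ∈ Np x then 1 else 0) = (Np x).card := by
      intro x
      rw [← Finset.card_filter]
      congr 1
      exact Finset.filter_univ_mem _
    calc ∑ v, d v = ∑ v : V, ∑ x : V, if v ∈ Np x then 1 else 0 :=
          Finset.sum_congr rfl fun v _ => h1 v
      _ = ∑ x : V, ∑ v : V, if v ∈ Np x then 1 else 0 := Finset.sum_comm
      _ = ∑ x : V, (Np x).card := Finset.sum_congr rfl fun x _ => h2 x
      _ = ∑ x : V, k := Finset.sum_congr rfl fun x _ => hNp2 x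
      _ = k * n := by rw [Finset.sum_const, Finset.card_univ, ← hn, smul_eq_mul, mul_comm]
  set P : ℕ := ∏ i ∈ range k, (m*(i+1)+1) with hP
  have hPpos : 0 < P := Finset.prod_pos fun i _ => by positivity
  set QQ : ℕ := ∏ i ∈ range k, (m*(i+1)) with hQQ
  set N : ℕ := n * P + 1 with hNdef
  have hNpos : 0 < N := Nat.succ_pos _
  set c : ℝ := ∏ i ∈ range k, ((m*(i+1) : ℕ) : ℝ) / (((m*(i+1) : ℕ) : ℝ) + 1) with hc
  have hcP : c * (P:ℝ) = (QQ:ℝ) := by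
    rw [hc, hP, hQQ, Finset.prod_div_distrib]
    push_cast
    rw [div_mul_cancel₀]
    apply ne_of_gt
    apply Finset.prod_pos
    intro i _
    positivity
  -- the saved-set function
  set F : (V → Fin N) → Finset V := fun ℓ => Finset.univ.filter
    (fun v => ∀ x : V, v ∈ Np x → ∃ a ∈ Np x, a ≠ v ∧ ℓ v < ℓ a) with hF
  -- coverage property
  have hcover : ∀ (ℓ : V → Fin N) (v : V), ∃ u ∈ Finset.univ \ F ℓ, G.Adj v u := by
    intro ℓ v
    have hne : (Np v).Nonempty := by
      rw [← Finset.card_pos, hNp2]; omega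
    obtain ⟨u, hu, hmax⟩ := Finset.exists_max_image (Np v) ℓ hne
    refine ⟨u, ?_, ?_⟩
    · rw [Finset.mem_sdiff]
      refine ⟨Finset.mem_univ _, ?_⟩
      rw [hF, Finset.mem_filter]
      rintro ⟨-, hsav⟩
      obtain ⟨a, ha, -, hlt⟩ := hsav v hu
      exact absurd (hmax a ha) (not_le.2 hlt)
    · exact (SimpleGraph.mem_neighborFinset G v u).1 (hNp1 v hu)
  -- expectation lower bound
  haveI : Nonempty (V → Fin N) := ⟨fun _ => ⟨0, hNpos⟩⟩
  have hswap : ∑ ℓ : V → Fin N, ((F ℓ).card : ℝ)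
      = ∑ v : V, (((Finset.univ.filter (fun ℓ : V → Fin N =>
          ∀ x : V, v ∈ Np x → ∃ a ∈ Np x, a ≠ v ∧ ℓ v < ℓ a)).card : ℝ)) := by
    have e1 : ∀ ℓ : V → Fin N, ((F ℓ).card : ℝ)
        = ∑ v : V, if (∀ x : V, v ∈ Np x → ∃ a ∈ Np x, a ≠ v ∧ ℓ v < ℓ a) then (1:ℝ) else 0 := by
      intro ℓ
      rw [hF, Finset.card_filter]
      push_cast
      rfl
    rw [Finset.sum_congr rfl fun ℓ _ => e1 ℓ, Finset.sum_comm]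
    apply Finset.sum_congr rfl
    intro v _
    rw [Finset.card_filter]
    push_cast
    rfl
  -- apply per-vertex bound and sum
  have hstep1 : ∑ t : Fin N, ((N:ℝ)^n) * (n:ℝ) * (1 - (((t:ℕ):ℝ)+1)^m / (N:ℝ)^m)^k
      ≤ (N:ℝ) * ∑ ℓ : V → Fin N, ((F ℓ).card : ℝ) := by
    rw [hswap, Finset.mul_sum]
    have hperv : ∀ v : V,
        ∑ t : Fin N, ((N:ℝ)^n) * (1 - (((t:ℕ):ℝ)+1)^m / (N:ℝ)^m)^(d v)
        ≤ (N:ℝ) * (((Finset.univ.filter (fun ℓ : V → Fin N =>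
            ∀ x : V, v ∈ Np x → ∃ a ∈ Np x, a ≠ v ∧ ℓ v < ℓ a)).card : ℝ)) :=
      fun v => per_v_bound hn.symm hNpos Np v (hB v)
    have hr : ∀ t : Fin N, 0 ≤ 1 - (((t:ℕ):ℝ)+1)^m / (N:ℝ)^m
        ∧ 1 - (((t:ℕ):ℝ)+1)^m / (N:ℝ)^m ≤ 1 := by
      intro t
      have ht1 : ((t:ℕ):ℝ) + 1 ≤ (N:ℝ) := by
        have := t.isLt
        exact_mod_cast Nat.succ_le_of_lt this
      have hpow : (((t:ℕ):ℝ)+1)^m ≤ (N:ℝ)^m :=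
        pow_le_pow_left₀ (by positivity) ht1 m
      have hNm : (0:ℝ) < (N:ℝ)^m := by positivity
      constructor
      · have : (((t:ℕ):ℝ)+1)^m / (N:ℝ)^m ≤ 1 := by
          rw [div_le_one hNm]; exact hpow
        linarith
      · have : 0 ≤ (((t:ℕ):ℝ)+1)^m / (N:ℝ)^m := by positivity
        linarith
    calc ∑ t : Fin N, ((N:ℝ)^n) * (n:ℝ) * (1 - (((t:ℕ):ℝ)+1)^m / (N:ℝ)^m)^k
        ≤ ∑ t : Fin N, ((N:ℝ)^n) * ∑ v : V, (1 - (((t:ℕ):ℝ)+1)^m / (N:ℝ)^m)^(d v) := by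
          apply Finset.sum_le_sum
          intro t _
          rw [mul_assoc]
          apply mul_le_mul_of_nonneg_left _ (by positivity)
          have := sum_pow_ge (1 - (((t:ℕ):ℝ)+1)^m / (N:ℝ)^m) (hr t).1 (hr t).2 d k
            (by omega) (by rw [hdsum, hn])
          rw [← hn] at this
          exact this
      _ = ∑ v : V, ∑ t : Fin N, ((N:ℝ)^n) * (1 - (((t:ℕ):ℝ)+1)^m / (N:ℝ)^m)^(d v) := by
          rw [Finset.sum_comm]
          apply Finset.sum_congr rfl
          intro t _
          rw [Finset.mul_sum]
      _ ≤ ∑ v : V, (N:ℝ) * (((Finset.univ.filter (fun ℓ : V → Fin N =>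
            ∀ x : V, v ∈ Np x → ∃ a ∈ Np x, a ≠ v ∧ ℓ v < ℓ a)).card : ℝ)) :=
          Finset.sum_le_sum fun v _ => hperv v
  -- evaluate the t-sum with the Riemann bound
  have hriem : (c - 1/(N:ℝ)) * (N:ℝ)
      ≤ ∑ t : Fin N, (1 - (((t:ℕ):ℝ)+1)^m / (N:ℝ)^m)^k := by
    have hb := riemann_bound m k N hm1 (by omega) hNpos
    rw [← hc] at hb
    have hsum_eq : ∑ t : Fin N, (1 - (((t:ℕ):ℝ)+1)^m / (N:ℝ)^m)^k
        = ∑ t ∈ range N, (1 - (((t:ℝ)+1)/(N:ℝ))^m)^k := by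
      rw [Fin.sum_univ_eq_sum_range (fun t => (1 - (((t:ℕ):ℝ)+1)^m / (N:ℝ)^m)^k) N]
      apply Finset.sum_congr rfl
      intro t _
      rw [div_pow]
    rw [hsum_eq]
    have hNR : (0:ℝ) < N := by exact_mod_cast hNpos
    calc (c - 1/(N:ℝ)) * (N:ℝ)
        ≤ ((1/(N:ℝ)) * ∑ t ∈ range N, (1 - (((t:ℝ)+1)/(N:ℝ))^m)^k) * (N:ℝ) :=
          mul_le_mul_of_nonneg_right hb hNR.le
      _ = ∑ t ∈ range N, (1 - (((t:ℝ)+1)/(N:ℝ))^m)^k := by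
          field_simp
  -- combine into a lower bound on the expectation
  have hNR : (0:ℝ) < N := by exact_mod_cast hNpos
  have hNn : (0:ℝ) < (N:ℝ)^n := by positivity
  have htotal : (N:ℝ)^n * ((n:ℝ) * c - (n:ℝ)/(N:ℝ))
      ≤ ∑ ℓ : V → Fin N, ((F ℓ).card : ℝ) := by
    have h1 : ∑ t : Fin N, ((N:ℝ)^n) * (n:ℝ) * (1 - (((t:ℕ):ℝ)+1)^m / (N:ℝ)^m)^k
        = ((N:ℝ)^n) * (n:ℝ) * ∑ t : Fin N, (1 - (((t:ℕ):ℝ)+1)^m / (N:ℝ)^m)^k := by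
      rw [Finset.mul_sum]
    have h2 : ((N:ℝ)^n) * (n:ℝ) * ((c - 1/(N:ℝ)) * (N:ℝ))
        ≤ ∑ t : Fin N, ((N:ℝ)^n) * (n:ℝ) * (1 - (((t:ℕ):ℝ)+1)^m / (N:ℝ)^m)^k := by
      rw [h1]
      apply mul_le_mul_of_nonneg_left hriem (by positivity)
    have h3 := le_trans h2 hstep1
    have h4 : ((N:ℝ)^n) * (n:ℝ) * ((c - 1/(N:ℝ)) * (N:ℝ))
        = ((N:ℝ)^n * ((n:ℝ) * c - (n:ℝ)/(N:ℝ))) * (N:ℝ) := by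
      field_simp
    rw [h4] at h3
    exact le_of_mul_le_mul_right (by linarith [h3]) hNR
  -- pass to the maximum
  obtain ⟨ℓ₀, -, hbest⟩ := Finset.exists_max_image (Finset.univ : Finset (V → Fin N))
    (fun ℓ => (F ℓ).card) Finset.univ_nonempty
  have hmaxb : ∑ ℓ : V → Fin N, ((F ℓ).card : ℝ) ≤ (N:ℝ)^n * ((F ℓ₀).card : ℝ) := by
    have := Finset.sum_le_card_nsmul (Finset.univ : Finset (V → Fin N))
      (fun ℓ => ((F ℓ).card : ℝ)) ((F ℓ₀).card : ℝ)
      (fun ℓ _ => by simpa using (Nat.cast_le (α := ℝ)).2 (hbest ℓ (Finset.mem_univ ℓ)))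
    rw [Finset.card_univ, Fintype.card_fun, Fintype.card_fin, ← hn] at this
    rw [nsmul_eq_mul] at this
    push_cast at this ⊢
    exact this
  have hmain : (n:ℝ) * c - (n:ℝ)/(N:ℝ) ≤ ((F ℓ₀).card : ℝ) := by
    have := le_trans htotal hmaxb
    exact le_of_mul_le_mul_left this hNn
  -- integrality argument
  have hclaim : c * (n:ℝ) ≤ ((F ℓ₀).card : ℝ) := by
    set s : ℕ := (F ℓ₀).card with hs
    by_contra hcon
    push_neg at hcon
    have hsP : (s:ℝ) * P < (n:ℝ) * QQ := by
      have hPR : (0:ℝ) < P := by exact_mod_cast hPpos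
      calc (s:ℝ) * P < (c * n) * P := by apply mul_lt_mul_of_pos_right hcon hPR
        _ = (n:ℝ) * (c * P) := by ring
        _ = (n:ℝ) * QQ := by rw [hcP]
    have hsPn : s * P < n * QQ := by exact_mod_cast hsP
    have hsP1 : (s:ℝ) * P ≤ (n:ℝ) * QQ - 1 := by
      have : s * P + 1 ≤ n * QQ := hsPn
      have := (Nat.cast_le (α := ℝ)).2 this
      push_cast at this
      linarith
    have hlow : (n:ℝ) * QQ - (n:ℝ) * P / N ≤ (s:ℝ) * P := by
      have hPR : (0:ℝ) < P := by exact_mod_cast hPpos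
      have h5 : ((n:ℝ) * c - (n:ℝ)/(N:ℝ)) * P ≤ (s:ℝ) * P :=
        mul_le_mul_of_nonneg_right hmain hPR.le
      calc (n:ℝ) * QQ - (n:ℝ) * P / N
          = ((n:ℝ) * c - (n:ℝ)/(N:ℝ)) * P := by
            rw [← hcP]; field_simp
        _ ≤ (s:ℝ) * P := h5
    have hfrac : (n:ℝ) * P / N < 1 := by
      rw [div_lt_one hNR]
      rw [hNdef]
      push_cast
      linarith
    linarith
  -- conclude
  refine ⟨Finset.univ \ F ℓ₀, fun v => hcover ℓ₀ v, ?_⟩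
  have hsub : (F ℓ₀).card ≤ n := by rw [hn]; exact Finset.card_le_univ _
  have hcard2 : ((Finset.univ \ F ℓ₀).card : ℝ) = (n:ℝ) - ((F ℓ₀).card : ℝ) := by
    rw [Finset.card_sdiff_of_subset (Finset.subset_univ _), Finset.card_univ, ← hn]
    push_cast [Nat.cast_sub hsub]
    ring
  rw [hcard2]
  have hceq : (Nat.factorial k : ℝ) / ∏ i ∈ Finset.range k, ((k:ℝ)/((k:ℝ)-1) + i) = c := by
    rw [hc, hkdef]
    rw [← c_eq m hm1]
    push_cast
    ring_nf
  rw [hceq]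
  have : c * (n:ℝ) ≤ ((F ℓ₀).card : ℝ) := hclaim
  nlinarith [this]
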